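/- Let Ω ⊂ R^d (d ∈ {2,3}) be bounded Lipschitz and ε : R^2 → R continuous with 0 < ε_* ≤ ε ≤ ε^*. Suppose c^n = (c_A^n, c_B^n) → c = (c_A, c_B) in L^2(Ω;R^2) and a.e., Φ^n, Φ ∈ H_0^1(Ω) satisfy (ε(c^n)(E_0 − ∇Φ^n), ∇Λ)_{L^2} = 0 and (ε(c)(E_0 − ∇Φ), ∇Λ)_{L^2} = 0 for all Λ ∈ H_0^1(Ω), and ∇Φ^n ⇀ ∇Φ weakly in L^2. Then ∇Φ^n → ∇Φ strongly in L^2(Ω;R^d). -/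

import Mathlib

open MeasureTheory Filter
open scoped RealInnerProductSpace ENNReal

/-- Step (vii) of Proposition 3.11: strong `L²` convergence of the electric fields.
`H₀¹(Ω)` is identified with the closed subspace `𝒢` of gradients in `L²(Ω;ℝ^d)`, so
`Gₙ = ∇Φⁿ, G = ∇Φ ∈ 𝒢`.  If `cⁿ → c` in `L²` and a.e., the weak Maxwell formulations hold
for `(cⁿ, Φⁿ)` and `(c, Φ)`, and `∇Φⁿ ⇀ ∇Φ` weakly in `L²`, then `∇Φⁿ → ∇Φ` strongly
in `L²(Ω;ℝ^d)`. -/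
theorem stmt_19 {d : ℕ} (hd : d = 2 ∨ d = 3)
    (Ω : Set (EuclideanSpace ℝ (Fin d))) (hΩmeas : MeasurableSet Ω)
    (hΩbdd : Bornology.IsBounded Ω)
    (μ : Measure (EuclideanSpace ℝ (Fin d))) (hμ : μ = volume.restrict Ω)
    (ε : EuclideanSpace ℝ (Fin 2) → ℝ) (hεc : Continuous ε)
    (εstar εStar : ℝ) (h0 : 0 < εstar)
    (hεb : ∀ s, εstar ≤ ε s ∧ ε s ≤ εStar)
    (cn : ℕ → EuclideanSpace ℝ (Fin d) → EuclideanSpace ℝ (Fin 2))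
    (c : EuclideanSpace ℝ (Fin d) → EuclideanSpace ℝ (Fin 2))
    (hcnm : ∀ n, Measurable (cn n)) (hcm : Measurable c)
    (hL2 : Tendsto (fun n => ∫ x, ‖cn n x - c x‖ ^ 2 ∂μ) atTop (nhds 0))
    (hae : ∀ᵐ x ∂μ, Tendsto (fun n => cn n x) atTop (nhds (c x)))
    (𝒢 : Submodule ℝ (Lp (EuclideanSpace ℝ (Fin d)) 2 μ))
    (h𝒢 : IsClosed (𝒢 : Set (Lp (EuclideanSpace ℝ (Fin d)) 2 μ)))
    (E0 : Lp (EuclideanSpace ℝ (Fin d)) 2 μ)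
    (Gn : ℕ → Lp (EuclideanSpace ℝ (Fin d)) 2 μ) (G : Lp (EuclideanSpace ℝ (Fin d)) 2 μ)
    (hGn : ∀ n, Gn n ∈ 𝒢) (hG : G ∈ 𝒢)
    (hweakn : ∀ n, ∀ W ∈ 𝒢, ∫ x, ε (cn n x) * ⟪E0 x - Gn n x, W x⟫ ∂μ = 0)
    (hweak : ∀ W ∈ 𝒢, ∫ x, ε (c x) * ⟪E0 x - G x, W x⟫ ∂μ = 0)
    (hweakconv : ∀ h : Lp (EuclideanSpace ℝ (Fin d)) 2 μ,
      Tendsto (fun n => ∫ x, ⟪Gn n x, h x⟫ ∂μ) atTop (nhds (∫ x, ⟪G x, h x⟫ ∂μ))) :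
    Tendsto (fun n => ‖Gn n - G‖) atTop (nhds 0) := by
  classical
  set C : ℝ := εStar - εstar with hCdef
  have hC0 : 0 ≤ C := by
    have h1 := (hεb 0).1
    have h2 := (hεb 0).2
    simp only [hCdef]; linarith
  have hbound : ∀ a b, |ε a - ε b| ≤ C :=
    fun a b => abs_sub_le_iff.2
      ⟨by linarith [(hεb a).2, (hεb b).1], by linarith [(hεb b).2, (hεb a).1]⟩
  have hεnm : ∀ n, AEStronglyMeasurable (fun x => ε (cn n x)) μ :=
    fun n => (hεc.measurable.comp (hcnm n)).aestronglyMeasurable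
  have hεcm : AEStronglyMeasurable (fun x => ε (c x)) μ :=
    (hεc.measurable.comp hcm).aestronglyMeasurable
  have hεdm : ∀ n, AEStronglyMeasurable (fun x => ε (cn n x) - ε (c x)) μ :=
    fun n => (hεnm n).sub hεcm
  -- MemLp of the F = E0 - G pointwise function
  have hFmem : MemLp (fun x => E0 x - G x) 2 μ := (Lp.memLp E0).sub (Lp.memLp G)
  -- the perturbation h_n
  have hHmem : ∀ n, MemLp (fun x => (ε (cn n x) - ε (c x)) • (E0 x - G x)) 2 μ := by
    intro n
    refine MemLp.of_le_mul (c := C) hFmem ((hεdm n).smul hFmem.aestronglyMeasurable)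
      (Eventually.of_forall fun x => ?_)
    rw [norm_smul, Real.norm_eq_abs]
    exact mul_le_mul_of_nonneg_right (hbound _ _) (norm_nonneg _)
  -- integrability of ‖E0 - G‖²
  have hFsq : Integrable (fun x => ‖E0 x - G x‖ ^ 2) μ := by
    refine (L2.integrable_inner (𝕜 := ℝ) (E0 - G) (E0 - G)).congr ?_
    filter_upwards [Lp.coeFn_sub E0 G] with x hx
    rw [hx, Pi.sub_apply, real_inner_self_eq_norm_sq]
  -- the squared L² norms of h_n tend to 0 (dominated convergence)
  have hItend : Tendsto
      (fun n => ∫ x, ‖(ε (cn n x) - ε (c x)) • (E0 x - G x)‖ ^ 2 ∂μ) atTop (nhds 0) := by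
    have h00 : (0 : ℝ) = ∫ _x, (0 : ℝ) ∂μ := by simp
    rw [h00]
    refine tendsto_integral_of_dominated_convergence
      (fun x => C ^ 2 * ‖E0 x - G x‖ ^ 2) ?_ (hFsq.const_mul _) ?_ ?_
    · intro n
      exact (((hHmem n).aestronglyMeasurable).norm.aemeasurable.pow_const 2).aestronglyMeasurable
    · intro n
      refine Eventually.of_forall fun x => ?_
      rw [Real.norm_eq_abs, abs_of_nonneg (by positivity), norm_smul, mul_pow,
        Real.norm_eq_abs]
      have h1 : |ε (cn n x) - ε (c x)| ^ 2 ≤ C ^ 2 :=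
        pow_le_pow_left₀ (abs_nonneg _) (hbound _ _) 2
      exact mul_le_mul_of_nonneg_right h1 (by positivity)
    · filter_upwards [hae] with x hx
      have h1 : Tendsto (fun n => ε (cn n x)) atTop (nhds (ε (c x))) :=
        (hεc.tendsto _).comp hx
      have hcont : Continuous fun r : ℝ => ‖(r - ε (c x)) • (E0 x - G x)‖ ^ 2 :=
        (((continuous_id.sub continuous_const).smul continuous_const).norm).pow 2
      have := (hcont.tendsto (ε (c x))).comp h1
      simpa [Function.comp_def] using this
  -- key integrability helper
  have hint : ∀ (φ : EuclideanSpace ℝ (Fin d) → ℝ), AEStronglyMeasurable φ μ →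
      (∃ B, ∀ x, |φ x| ≤ B) →
      ∀ f g h : Lp (EuclideanSpace ℝ (Fin d)) 2 μ,
      Integrable (fun x => φ x * ⟪f x - g x, h x⟫) μ := by
    rintro φ hφ ⟨B, hB⟩ f g h
    have h1 := (L2.integrable_inner (𝕜 := ℝ) f h).bdd_mul hφ
      (Eventually.of_forall fun x => by simpa [Real.norm_eq_abs] using hB x)
    have h2 := (L2.integrable_inner (𝕜 := ℝ) g h).bdd_mul hφ
      (Eventually.of_forall fun x => by simpa [Real.norm_eq_abs] using hB x)
    refine (h1.sub h2).congr (Eventually.of_forall fun x => ?_)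
    simp [inner_sub_left, mul_sub]
  have hbd1 : ∀ n, ∃ B, ∀ x, |ε (cn n x)| ≤ B := by
    intro n
    exact ⟨εStar, fun x => abs_le.2
      ⟨by linarith [(hεb (cn n x)).1, (hεb (cn n x)).2, h0], (hεb (cn n x)).2⟩⟩
  have hbd2 : ∃ B, ∀ x, |ε (c x)| ≤ B :=
    ⟨εStar, fun x => abs_le.2
      ⟨by linarith [(hεb (c x)).1, (hεb (c x)).2, h0], (hεb (c x)).2⟩⟩
  -- the main per-n estimate
  have hmain : ∀ n, ‖Gn n - G‖ ≤
      Real.sqrt (∫ x, ‖(ε (cn n x) - ε (c x)) • (E0 x - G x)‖ ^ 2 ∂μ) / εstar := by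
    intro n
    set W : Lp (EuclideanSpace ℝ (Fin d)) 2 μ := Gn n - G with hWdef
    have hWmem : W ∈ 𝒢 := Submodule.sub_mem 𝒢 (hGn n) hG
    have hWcoe : ∀ᵐ x ∂μ, W x = Gn n x - G x := by
      filter_upwards [Lp.coeFn_sub (Gn n) G] with x hx
      exact hx
    have h1 := hweakn n W hWmem
    have h2 := hweak W hWmem
    have Ia : Integrable (fun x => ε (cn n x) * ⟪E0 x - Gn n x, W x⟫) μ :=
      hint _ (hεnm n) (hbd1 n) E0 (Gn n) W
    have Ib : Integrable (fun x => ε (c x) * ⟪E0 x - G x, W x⟫) μ :=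
      hint _ hεcm hbd2 E0 G W
    have Ic : Integrable (fun x => ε (cn n x) * ⟪Gn n x - G x, W x⟫) μ :=
      hint _ (hεnm n) (hbd1 n) (Gn n) G W
    have Id : Integrable (fun x => (ε (cn n x) - ε (c x)) * ⟪E0 x - G x, W x⟫) μ :=
      hint _ (hεdm n) ⟨C, fun x => hbound _ _⟩ E0 G W
    -- key identity
    have hkey : ∫ x, (ε (cn n x) - ε (c x)) * ⟪E0 x - G x, W x⟫ ∂μ
        = ∫ x, ε (cn n x) * ⟪Gn n x - G x, W x⟫ ∂μ := by
      have hptw : (fun x => (ε (cn n x) - ε (c x)) * ⟪E0 x - G x, W x⟫)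
          = fun x => (ε (cn n x) * ⟪E0 x - Gn n x, W x⟫
              - ε (c x) * ⟪E0 x - G x, W x⟫)
              + ε (cn n x) * ⟪Gn n x - G x, W x⟫ := by
        funext x
        simp only [inner_sub_left]
        ring
      have Iab : Integrable (fun x => ε (cn n x) * ⟪E0 x - Gn n x, W x⟫
          - ε (c x) * ⟪E0 x - G x, W x⟫) μ := Ia.sub Ib
      rw [hptw, integral_add Iab Ic, integral_sub Ia Ib, h1, h2]
      ring
    -- lower bound
    have hlow : εstar * ‖W‖ ^ 2 ≤ ∫ x, ε (cn n x) * ⟪Gn n x - G x, W x⟫ ∂μ := by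
      have hWW : ‖W‖ ^ 2 = ∫ x, ⟪W x, W x⟫ ∂μ := by
        rw [← real_inner_self_eq_norm_sq]
        exact L2.inner_def W W
      rw [hWW, ← integral_const_mul]
      refine integral_mono_ae ((L2.integrable_inner (𝕜 := ℝ) W W).const_mul εstar) Ic ?_
      filter_upwards [hWcoe] with x hx
      rw [← hx]
      exact mul_le_mul_of_nonneg_right (hεb (cn n x)).1 real_inner_self_nonneg
    -- upper bound via Cauchy-Schwarz with h_n
    have hup : ∫ x, (ε (cn n x) - ε (c x)) * ⟪E0 x - G x, W x⟫ ∂μ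
        ≤ Real.sqrt (∫ x, ‖(ε (cn n x) - ε (c x)) • (E0 x - G x)‖ ^ 2 ∂μ) * ‖W‖ := by
      set Hn : Lp (EuclideanSpace ℝ (Fin d)) 2 μ := (hHmem n).toLp _ with hHndef
      have hHcoe : ∀ᵐ x ∂μ, Hn x = (ε (cn n x) - ε (c x)) • (E0 x - G x) :=
        (hHmem n).coeFn_toLp
      have heq : ⟪Hn, W⟫ = ∫ x, (ε (cn n x) - ε (c x)) * ⟪E0 x - G x, W x⟫ ∂μ := by
        rw [L2.inner_def]
        refine integral_congr_ae ?_
        filter_upwards [hHcoe] with x hx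
        rw [hx, real_inner_smul_left]
      have hHnorm : ‖Hn‖
          = Real.sqrt (∫ x, ‖(ε (cn n x) - ε (c x)) • (E0 x - G x)‖ ^ 2 ∂μ) := by
        have hsq : ‖Hn‖ ^ 2 = ∫ x, ‖(ε (cn n x) - ε (c x)) • (E0 x - G x)‖ ^ 2 ∂μ := by
          rw [← real_inner_self_eq_norm_sq, L2.inner_def]
          refine integral_congr_ae ?_
          filter_upwards [hHcoe] with x hx
          rw [hx, real_inner_self_eq_norm_sq]
        rw [← hsq, Real.sqrt_sq (norm_nonneg _)]
      calc ∫ x, (ε (cn n x) - ε (c x)) * ⟪E0 x - G x, W x⟫ ∂μ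
          = ⟪Hn, W⟫ := heq.symm
        _ ≤ ‖Hn‖ * ‖W‖ := real_inner_le_norm _ _
        _ = _ := by rw [hHnorm]
    -- combine
    have hcomb : εstar * ‖W‖ ^ 2
        ≤ Real.sqrt (∫ x, ‖(ε (cn n x) - ε (c x)) • (E0 x - G x)‖ ^ 2 ∂μ) * ‖W‖ :=
      hlow.trans (hkey ▸ hup)
    by_cases hw : ‖W‖ = 0
    · rw [hw]
      exact div_nonneg (Real.sqrt_nonneg _) h0.le
    · have hwpos : 0 < ‖W‖ := (norm_nonneg W).lt_of_ne (Ne.symm hw)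
      rw [le_div_iff₀ h0]
      nlinarith [hcomb, hwpos]
  -- squeeze
  refine squeeze_zero (fun n => norm_nonneg _) hmain ?_
  have hsq : Tendsto
      (fun n => Real.sqrt (∫ x, ‖(ε (cn n x) - ε (c x)) • (E0 x - G x)‖ ^ 2 ∂μ)) atTop
      (nhds (Real.sqrt 0)) := (Real.continuous_sqrt.tendsto 0).comp hItend
  simpa using hsq.div_const εstar
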